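/- For d = 0, the function W₀(x) = r·T(x₁) + (1-r)·T(x₂), where T(σ) = max(0, ∫_{s̲}^{σ} dξ/γ(ξ)), is a viscosity solution of the Hamilton–Jacobi–Bellman equation -1 + max_{(α,s*)∈U(x)} Q(x, -∇W₀(x), (α,s*)) = 0 on ℝ₊² \ 𝒯, with W₀ = 0 on the target 𝒯 = {max(x₁,x₂) ≤ s̲}. -/

import Mathlib

open Set Filter MeasureTheory

private lemma slope_right {f g : ℝ → ℝ} {a b t₀ : ℝ} (hf : HasDerivAt f a t₀)
    (hg : HasDerivAt g b t₀) (h : ∀ᶠ t in nhdsWithin t₀ (Ioi t₀), f t - f t₀ ≤ g t - g t₀) :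
    a ≤ b := by
  have hmono : nhdsWithin t₀ (Ioi t₀) ≤ nhdsWithin t₀ {t₀}ᶜ :=
    nhdsWithin_mono _ (fun t ht => ht.ne')
  have hf' := (hasDerivAt_iff_tendsto_slope.mp hf).mono_left hmono
  have hg' := (hasDerivAt_iff_tendsto_slope.mp hg).mono_left hmono
  refine le_of_tendsto_of_tendsto hf' hg' ?_
  filter_upwards [h, self_mem_nhdsWithin] with t ht ht'
  have hpos : (0:ℝ) < t - t₀ := sub_pos.mpr ht'
  simp only [slope_def_field]
  exact div_le_div_of_nonneg_right ht hpos.le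

private lemma slope_left {f g : ℝ → ℝ} {a b t₀ : ℝ} (hf : HasDerivAt f a t₀)
    (hg : HasDerivAt g b t₀) (h : ∀ᶠ t in nhdsWithin t₀ (Iio t₀), f t - f t₀ ≤ g t - g t₀) :
    b ≤ a := by
  have hmono : nhdsWithin t₀ (Iio t₀) ≤ nhdsWithin t₀ {t₀}ᶜ :=
    nhdsWithin_mono _ (fun t ht => ht.ne)
  have hf' := (hasDerivAt_iff_tendsto_slope.mp hf).mono_left hmono
  have hg' := (hasDerivAt_iff_tendsto_slope.mp hg).mono_left hmono
  refine le_of_tendsto_of_tendsto hg' hf' ?_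
  filter_upwards [h, self_mem_nhdsWithin] with t ht ht'
  have hneg : t - t₀ < 0 := sub_neg.mpr ht'
  simp only [slope_def_field]
  exact div_le_div_of_nonpos_of_le hneg.le ht

set_option maxHeartbeats 1000000 in
theorem stmt15 (μ γ : ℝ → ℝ) (r sb : ℝ)
    (hr : r ∈ Set.Ioo (0:ℝ) 1) (hsb : 0 < sb)
    (hC1 : ContDiff ℝ 1 μ) (hmono : StrictMonoOn μ (Set.Ici 0))
    (hconc : ConcaveOn ℝ (Set.Ici 0) μ) (h0 : μ 0 = 0)
    (hγ : ∀ σ > (0:ℝ), IsGreatest ((fun s : ℝ => μ s * (σ - s)) '' Set.Icc 0 σ) (γ σ))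
    (T : ℝ → ℝ) (W : ℝ × ℝ → ℝ)
    (Q : ℝ × ℝ → ℝ × ℝ → ℝ × ℝ → ℝ) (H : ℝ × ℝ → ℝ × ℝ → ℝ)
    (hT : ∀ σ, T σ = max 0 (∫ ξ in sb..σ, 1 / γ ξ))
    (hW : ∀ x : ℝ × ℝ, W x = r * T x.1 + (1 - r) * T x.2)
    (hQ : ∀ x lam u, Q x lam u = -(u.1 * lam.1 / r * (μ u.2 * (x.1 - u.2)) +
      (1 - u.1) * lam.2 / (1 - r) * (μ u.2 * (x.2 - u.2))))
    (hH : ∀ x p, H x p = -1 + sSup {q : ℝ | ∃ u : ℝ × ℝ,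
      u.1 ∈ Set.Icc (0:ℝ) 1 ∧ u.2 ∈ Set.Icc (0:ℝ) (u.1 * x.1 + (1 - u.1) * x.2) ∧
      q = Q x (-p.1, -p.2) u}) :
    (∀ x : ℝ × ℝ, 0 ≤ x.1 → 0 ≤ x.2 → ¬ max x.1 x.2 ≤ sb →
      (∀ φ : ℝ × ℝ → ℝ, ContDiff ℝ 1 φ → IsLocalMax (fun y => W y - φ y) x →
        H x (fderiv ℝ φ x (1, 0), fderiv ℝ φ x (0, 1)) ≤ 0) ∧
      (∀ φ : ℝ × ℝ → ℝ, ContDiff ℝ 1 φ → IsLocalMin (fun y => W y - φ y) x →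
        0 ≤ H x (fderiv ℝ φ x (1, 0), fderiv ℝ φ x (0, 1)))) ∧
    (∀ x : ℝ × ℝ, 0 ≤ x.1 → 0 ≤ x.2 → max x.1 x.2 ≤ sb → W x = 0) := by
  obtain ⟨hr0, hr1⟩ := hr
  have hr1' : (0:ℝ) < 1 - r := by linarith
  -- basic μ facts
  have μle : ∀ a b : ℝ, 0 ≤ a → a ≤ b → μ a ≤ μ b := fun a b ha hab =>
    hmono.monotoneOn (Set.mem_Ici.mpr ha) (Set.mem_Ici.mpr (ha.trans hab)) hab
  have μnn : ∀ s : ℝ, 0 ≤ s → 0 ≤ μ s := fun s hs => h0 ▸ μle 0 s le_rfl hs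
  have μpos : ∀ s : ℝ, 0 < s → 0 < μ s := fun s hs =>
    h0 ▸ hmono (Set.mem_Ici.mpr le_rfl) (Set.mem_Ici.mpr hs.le) hs
  -- γ facts
  have γnn : ∀ σ : ℝ, 0 < σ → 0 ≤ γ σ := by
    intro σ hσ
    have := (hγ σ hσ).2 (Set.mem_image_of_mem _ (⟨le_rfl, hσ.le⟩ : (0:ℝ) ∈ Set.Icc 0 σ))
    simpa [h0] using this
  have γub : ∀ σ : ℝ, 0 < σ → ∀ s : ℝ, 0 ≤ s → μ s * (σ - s) ≤ γ σ := by
    intro σ hσ s hs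
    rcases le_total s σ with h | h
    · exact (hγ σ hσ).2 (Set.mem_image_of_mem _ ⟨hs, h⟩)
    · have h1 : μ s * (σ - s) ≤ 0 :=
        mul_nonpos_of_nonneg_of_nonpos (μnn s hs) (by linarith)
      linarith [γnn σ hσ]
  have γpos : ∀ σ : ℝ, 0 < σ → 0 < γ σ := by
    intro σ hσ
    have h1 : 0 < μ (σ/2) * (σ - σ/2) := mul_pos (μpos (σ/2) (by linarith)) (by linarith)
    exact lt_of_lt_of_le h1 (γub σ hσ (σ/2) (by linarith))
  have γstep : ∀ σ σ' : ℝ, 0 < σ → σ ≤ σ' →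
      γ σ ≤ γ σ' ∧ γ σ' ≤ γ σ + μ σ' * (σ' - σ) := by
    intro σ σ' hσ hle
    have hσ' : 0 < σ' := lt_of_lt_of_le hσ hle
    obtain ⟨s, hsm, hs⟩ := (hγ σ hσ).1
    obtain ⟨s', hsm', hs'⟩ := (hγ σ' hσ').1
    simp only [] at hs hs'
    constructor
    · calc γ σ = μ s * (σ - s) := hs.symm
        _ ≤ μ s * (σ' - s) := mul_le_mul_of_nonneg_left (by linarith) (μnn s hsm.1)
        _ ≤ γ σ' := (hγ σ' hσ').2 (Set.mem_image_of_mem _ ⟨hsm.1, hsm.2.trans hle⟩)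
    · rcases le_total s' σ with h | h
      · have hβ : μ s' * (σ - s') ≤ γ σ :=
          (hγ σ hσ).2 (Set.mem_image_of_mem _ ⟨hsm'.1, h⟩)
        have hμ : μ s' ≤ μ σ' := μle s' σ' hsm'.1 hsm'.2
        have h2 : μ s' * (σ' - σ) ≤ μ σ' * (σ' - σ) :=
          mul_le_mul_of_nonneg_right hμ (by linarith)
        have e : μ s' * (σ' - s') = μ s' * (σ - s') + μ s' * (σ' - σ) := by ring
        rw [← hs', e]; linarith
      · have h1 : μ s' * (σ' - s') ≤ μ σ' * (σ' - s') :=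
          mul_le_mul_of_nonneg_right (μle s' σ' hsm'.1 hsm'.2) (by linarith [hsm'.2])
        have h2 : μ σ' * (σ' - s') ≤ μ σ' * (σ' - σ) :=
          mul_le_mul_of_nonneg_left (by linarith) (μnn σ' hσ'.le)
        rw [← hs']; linarith [γnn σ hσ]
  have γcts : ∀ σ₀ : ℝ, 0 < σ₀ → ContinuousAt γ σ₀ := by
    intro σ₀ hσ₀
    rw [Metric.continuousAt_iff]
    intro ε hε
    set K := μ (σ₀ + 1) with hKdef
    have hK0 : 0 ≤ K := μnn _ (by linarith)
    refine ⟨min (min 1 (σ₀/2)) (ε / (K + 1)), by positivity, ?_⟩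
    intro σ hσd
    rw [Real.dist_eq] at hσd ⊢
    have h1 : |σ - σ₀| < 1 :=
      lt_of_lt_of_le hσd (le_trans (min_le_left _ _) (min_le_left _ _))
    have h2 : |σ - σ₀| < σ₀/2 :=
      lt_of_lt_of_le hσd (le_trans (min_le_left _ _) (min_le_right _ _))
    have h3 : |σ - σ₀| < ε/(K+1) := lt_of_lt_of_le hσd (min_le_right _ _)
    obtain ⟨ha, hb⟩ := abs_lt.mp h2
    obtain ⟨ha1, hb1⟩ := abs_lt.mp h1
    have hσpos : 0 < σ := by linarith
    have hKey : |γ σ - γ σ₀| ≤ K * |σ - σ₀| := by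
      rcases le_total σ σ₀ with hle | hle
      · obtain ⟨hs1, hs2⟩ := γstep σ σ₀ hσpos hle
        have hμb : μ σ₀ ≤ K := μle σ₀ (σ₀ + 1) hσ₀.le (by linarith)
        have h4 : μ σ₀ * (σ₀ - σ) ≤ K * (σ₀ - σ) :=
          mul_le_mul_of_nonneg_right hμb (by linarith)
        rw [abs_of_nonpos (by linarith), abs_of_nonpos (by linarith)]
        nlinarith
      · obtain ⟨hs1, hs2⟩ := γstep σ₀ σ hσ₀ hle
        have hμb : μ σ ≤ K := μle σ (σ₀ + 1) hσpos.le (by linarith)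
        have h4 : μ σ * (σ - σ₀) ≤ K * (σ - σ₀) :=
          mul_le_mul_of_nonneg_right hμb (by linarith)
        rw [abs_of_nonneg (by linarith), abs_of_nonneg (by linarith)]
        nlinarith
    have hlast : K * |σ - σ₀| < ε := by
      have h5 : K * |σ - σ₀| ≤ K * (ε/(K+1)) :=
        mul_le_mul_of_nonneg_left h3.le hK0
      have h6 : K * (ε/(K+1)) < ε := by
        rw [mul_div_assoc']
        rw [div_lt_iff₀ (by positivity)]
        nlinarith
      linarith
    linarith [hKey, hlast]
  have invγcont : ContinuousOn (fun ξ => 1 / γ ξ) (Set.Ioi (0:ℝ)) :=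
    ContinuousOn.div continuousOn_const
      (fun ξ hξ => (γcts ξ hξ).continuousWithinAt) (fun ξ hξ => (γpos ξ hξ).ne')
  -- T facts
  have Tzero : ∀ σ : ℝ, 0 ≤ σ → σ ≤ sb → T σ = 0 := by
    intro σ hσ0 hσsb
    have h0ae : ∀ᵐ (ξ : ℝ), ξ ≠ 0 := by
      rw [ae_iff]
      simp only [not_not]
      simpa using measure_singleton (0:ℝ)
    have hae : (0:ℝ → ℝ) ≤ᵐ[volume.restrict (Set.Icc σ sb)] fun ξ => 1 / γ ξ := by
      refine (ae_restrict_iff' measurableSet_Icc).mpr ?_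
      filter_upwards [h0ae] with ξ hξ hmem
      have hξpos : 0 < ξ := lt_of_le_of_ne (hσ0.trans hmem.1) (Ne.symm hξ)
      have := γpos ξ hξpos
      positivity
    have hnn : 0 ≤ ∫ ξ in σ..sb, 1 / γ ξ :=
      intervalIntegral.integral_nonneg_of_ae_restrict hσsb hae
    rw [hT, intervalIntegral.integral_symm]
    exact max_eq_left (by linarith)
  have Fnn : ∀ σ : ℝ, sb ≤ σ → 0 ≤ ∫ ξ in sb..σ, 1 / γ ξ := by
    intro σ h
    refine intervalIntegral.integral_nonneg h (fun ξ hξ => ?_)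
    have hξpos : 0 < ξ := lt_of_lt_of_le hsb hξ.1
    have := γpos ξ hξpos
    positivity
  have TeqF : ∀ σ : ℝ, sb ≤ σ → T σ = ∫ ξ in sb..σ, 1 / γ ξ := by
    intro σ h
    rw [hT]; exact max_eq_right (Fnn σ h)
  have Fderiv : ∀ σ₀ : ℝ, sb ≤ σ₀ →
      HasDerivAt (fun σ => ∫ ξ in sb..σ, 1 / γ ξ) (1 / γ σ₀) σ₀ := by
    intro σ₀ h
    have hpos : (0:ℝ) < σ₀ := lt_of_lt_of_le hsb h
    have hint : IntervalIntegrable (fun ξ => 1 / γ ξ) volume sb σ₀ := by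
      apply ContinuousOn.intervalIntegrable
      apply invγcont.mono
      rw [Set.uIcc_of_le h]
      exact fun ξ hξ => lt_of_lt_of_le hsb hξ.1
    have hmeas : StronglyMeasurableAtFilter (fun ξ => 1 / γ ξ) (nhds σ₀) volume :=
      ContinuousOn.stronglyMeasurableAtFilter isOpen_Ioi invγcont σ₀ hpos
    have hct : ContinuousAt (fun ξ => 1 / γ ξ) σ₀ :=
      invγcont.continuousAt (Ioi_mem_nhds hpos)
    exact intervalIntegral.integral_hasDerivAt_right hint hmeas hct
  have ThasD : ∀ a : ℝ, sb < a → HasDerivAt T (1 / γ a) a := by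
    intro a ha
    refine (Fderiv a ha.le).congr_of_eventuallyEq ?_
    filter_upwards [Ioi_mem_nhds ha] with t ht
    exact TeqF t (le_of_lt ht)
  -- line derivatives of test functions
  have lineDeriv : ∀ (φ : ℝ × ℝ → ℝ), ContDiff ℝ 1 φ → ∀ x : ℝ × ℝ,
      HasDerivAt (fun t => φ (t, x.2)) (fderiv ℝ φ x (1, 0)) x.1 ∧
      HasDerivAt (fun t => φ (x.1, t)) (fderiv ℝ φ x (0, 1)) x.2 := by
    intro φ hφ x
    have hd : HasFDerivAt φ (fderiv ℝ φ x) x := (hφ.differentiable one_ne_zero x).hasFDerivAt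
    exact ⟨hd.comp_hasDerivAt x.1 ((hasDerivAt_id x.1).prodMk (hasDerivAt_const x.1 x.2)),
      hd.comp_hasDerivAt x.2 ((hasDerivAt_const x.2 x.1).prodMk (hasDerivAt_id x.2))⟩
  -- localization of extrema along coordinate lines
  have evline : ∀ (f : ℝ × ℝ → ℝ) (x : ℝ × ℝ), (∀ᶠ y in nhds x, f y ≤ f x) →
      (∀ᶠ t in nhds x.1, f (t, x.2) ≤ f x) ∧ (∀ᶠ t in nhds x.2, f (x.1, t) ≤ f x) := by
    intro f x h
    have ht1 : Tendsto (fun t : ℝ => ((t, x.2) : ℝ × ℝ)) (nhds x.1) (nhds x) :=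
      Continuous.tendsto (continuous_id.prodMk continuous_const) x.1
    have ht2 : Tendsto (fun t : ℝ => ((x.1, t) : ℝ × ℝ)) (nhds x.2) (nhds x) :=
      Continuous.tendsto (continuous_const.prodMk continuous_id) x.2
    exact ⟨ht1.eventually h, ht2.eventually h⟩
  -- the key one-dimensional subsolution estimate
  have coordS : ∀ (c a p : ℝ) (ψ : ℝ → ℝ), 0 < c → 0 ≤ a → HasDerivAt ψ p a →
      (∀ᶠ t in nhds a, c * T t - ψ t ≤ c * T a - ψ a) →
      ∀ s, 0 ≤ s → p / c * (μ s * (a - s)) ≤ 1 := by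
    intro c a p ψ hc ha hψ hev s hs
    rcases lt_trichotomy a sb with hlt | heq | hgt
    · rcases eq_or_lt_of_le ha with h0a | h0a
      · -- a = 0
        have hp : 0 ≤ p := by
          refine slope_right (f := fun _ => (0:ℝ)) (hasDerivAt_const a 0) hψ ?_
          have hev' := hev.filter_mono (nhdsWithin_le_nhds (s := Set.Ioi a))
          have hsb' : ∀ᶠ t in nhdsWithin a (Set.Ioi a), t < sb :=
            (eventually_lt_nhds hlt).filter_mono nhdsWithin_le_nhds
          filter_upwards [hev', hsb', self_mem_nhdsWithin] with t ht htsb ht0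
          have hTt : T t = 0 := Tzero t (by rw [← h0a] at ht0; exact (le_of_lt ht0)) htsb.le
          have hTa : T a = 0 := Tzero a ha hlt.le
          rw [hTt, hTa] at ht
          linarith
        have hfin : p / c * (μ s * (a - s)) ≤ 0 := by
          apply mul_nonpos_of_nonneg_of_nonpos (by positivity)
          apply mul_nonpos_of_nonneg_of_nonpos (μnn s hs)
          rw [← h0a]; linarith
        linarith
      · -- 0 < a < sb
        have hTloc : T =ᶠ[nhds a] fun _ => (0:ℝ) := by
          filter_upwards [Ioo_mem_nhds h0a hlt] with t ht
          exact Tzero t ht.1.le ht.2.le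
        have hTd : HasDerivAt T 0 a := (hasDerivAt_const a (0:ℝ)).congr_of_eventuallyEq hTloc
        have hmax' : IsLocalMax (fun t => c * T t - ψ t) a := hev
        have h0' : c * 0 - p = 0 :=
          hmax'.hasDerivAt_eq_zero ((hTd.const_mul c).sub hψ)
        have hp : p = 0 := by linarith
        rw [hp]
        simp
    · -- a = sb : contradiction
      exfalso
      subst heq
      have hub : c * (1 / γ a) ≤ p := by
        refine slope_right (f := fun t => c * (∫ ξ in a..t, 1 / γ ξ))
          ((Fderiv a le_rfl).const_mul c) hψ ?_
        have hev' := hev.filter_mono (nhdsWithin_le_nhds (s := Set.Ioi a))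
        filter_upwards [hev', self_mem_nhdsWithin] with t ht htm
        have h1 : T t = ∫ ξ in a..t, 1 / γ ξ := TeqF t (le_of_lt htm)
        have h2 : T a = 0 := Tzero a hsb.le le_rfl
        have h3 : (∫ ξ in a..a, 1 / γ ξ) = 0 := intervalIntegral.integral_same
        rw [h1, h2] at ht
        rw [h3]
        linarith
      have hlb : p ≤ 0 := by
        refine slope_left (f := fun _ => (0:ℝ)) (hasDerivAt_const a 0) hψ ?_
        have hev' := hev.filter_mono (nhdsWithin_le_nhds (s := Set.Iio a))
        have hpos : ∀ᶠ t in nhdsWithin a (Set.Iio a), 0 < t :=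
          (eventually_gt_nhds hsb).filter_mono nhdsWithin_le_nhds
        filter_upwards [hev', hpos, self_mem_nhdsWithin] with t ht ht0 htm
        rw [Tzero t ht0.le (le_of_lt htm), Tzero a hsb.le le_rfl] at ht
        linarith
      have hγa := γpos a hsb
      have : 0 < c * (1 / γ a) := by positivity
      linarith
    · -- sb < a
      have hTd : HasDerivAt T (1 / γ a) a := ThasD a hgt
      have hmax' : IsLocalMax (fun t => c * T t - ψ t) a := hev
      have h0' : c * (1 / γ a) - p = 0 :=
        hmax'.hasDerivAt_eq_zero ((hTd.const_mul c).sub hψ)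
      have hp : p = c * (1 / γ a) := by linarith
      have hγa : 0 < γ a := γpos a (lt_trans hsb hgt)
      have hβ : μ s * (a - s) ≤ γ a := γub a (lt_trans hsb hgt) s hs
      rw [hp]
      have hpc : c * (1 / γ a) / c = 1 / γ a := by field_simp
      rw [hpc, one_div]
      calc (γ a)⁻¹ * (μ s * (a - s)) ≤ (γ a)⁻¹ * γ a :=
            mul_le_mul_of_nonneg_left hβ (by positivity)
        _ = 1 := inv_mul_cancel₀ hγa.ne'
  -- pinning the derivative at supersolution points
  have pinMin : ∀ (c a p : ℝ) (ψ : ℝ → ℝ), 0 < c → sb < a → HasDerivAt ψ p a →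
      (∀ᶠ t in nhds a, c * T a - ψ a ≤ c * T t - ψ t) → p = c * (1 / γ a) := by
    intro c a p ψ hc ha hψ hev
    have hmin' : IsLocalMin (fun t => c * T t - ψ t) a := hev
    have h0' : c * (1 / γ a) - p = 0 :=
      hmin'.hasDerivAt_eq_zero (((ThasD a ha).const_mul c).sub hψ)
    linarith
  constructor
  · intro x hx1 hx2 hxm
    have hOR : sb < x.1 ∨ sb < x.2 := by
      by_contra h
      push_neg at h
      exact hxm (max_le h.1 h.2)
    constructor
    · -- subsolution
      intro φ hφ hmax
      rw [hH]
      obtain ⟨l1, l2⟩ := lineDeriv φ hφ x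
      obtain ⟨e1, e2⟩ := evline (fun y => W y - φ y) x hmax
      have e1' : ∀ᶠ t in nhds x.1,
          r * T t - φ (t, x.2) ≤ r * T x.1 - φ (x.1, x.2) := by
        filter_upwards [e1] with t ht
        have h1 : W (t, x.2) = r * T t + (1 - r) * T x.2 := by rw [hW]
        have h2 : W x = r * T x.1 + (1 - r) * T x.2 := by rw [hW]
        have h3 : φ x = φ (x.1, x.2) := rfl
        rw [h1, h2, h3] at ht
        linarith
      have e2' : ∀ᶠ t in nhds x.2,
          (1 - r) * T t - φ (x.1, t) ≤ (1 - r) * T x.2 - φ (x.1, x.2) := by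
        filter_upwards [e2] with t ht
        have h1 : W (x.1, t) = r * T x.1 + (1 - r) * T t := by rw [hW]
        have h2 : W x = r * T x.1 + (1 - r) * T x.2 := by rw [hW]
        have h3 : φ x = φ (x.1, x.2) := rfl
        rw [h1, h2, h3] at ht
        linarith
      have hsup : sSup {q : ℝ | ∃ u : ℝ × ℝ,
          u.1 ∈ Set.Icc (0:ℝ) 1 ∧ u.2 ∈ Set.Icc (0:ℝ) (u.1 * x.1 + (1 - u.1) * x.2) ∧
          q = Q x (-(fderiv ℝ φ x (1, 0), fderiv ℝ φ x (0, 1)).1,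
                  -(fderiv ℝ φ x (1, 0), fderiv ℝ φ x (0, 1)).2) u} ≤ 1 := by
        apply Real.sSup_le _ zero_le_one
        rintro q ⟨u, hu1, hu2, rfl⟩
        rw [hQ]
        have A1 : fderiv ℝ φ x (1, 0) / r * (μ u.2 * (x.1 - u.2)) ≤ 1 :=
          coordS r x.1 _ _ hr0 hx1 l1 e1' u.2 hu2.1
        have A2 : fderiv ℝ φ x (0, 1) / (1 - r) * (μ u.2 * (x.2 - u.2)) ≤ 1 :=
          coordS (1 - r) x.2 _ _ hr1' hx2 l2 e2' u.2 hu2.1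
        have hu11 : (0:ℝ) ≤ 1 - u.1 := by linarith [hu1.2]
        have expand : -(u.1 * -(fderiv ℝ φ x (1, 0)) / r * (μ u.2 * (x.1 - u.2)) +
            (1 - u.1) * -(fderiv ℝ φ x (0, 1)) / (1 - r) * (μ u.2 * (x.2 - u.2))) =
            u.1 * (fderiv ℝ φ x (1, 0) / r * (μ u.2 * (x.1 - u.2))) +
            (1 - u.1) * (fderiv ℝ φ x (0, 1) / (1 - r) * (μ u.2 * (x.2 - u.2))) := by ring
        rw [expand]
        have hh1 := mul_le_mul_of_nonneg_left A1 hu1.1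
        have hh2 := mul_le_mul_of_nonneg_left A2 hu11
        rw [mul_one] at hh1 hh2
        linarith
      linarith
    · -- supersolution
      intro φ hφ hmin
      rw [hH]
      obtain ⟨l1, l2⟩ := lineDeriv φ hφ x
      obtain ⟨e1, e2⟩ := evline (fun y => φ y - W y) x
        (by filter_upwards [hmin] with z hz
            have h' : W x - φ x ≤ W z - φ z := hz
            show φ z - W z ≤ φ x - W x
            linarith)
      set M := max x.1 x.2 with hM
      have hM0 : 0 ≤ M := le_trans hx1 (le_max_left _ _)
      set S := {q : ℝ | ∃ u : ℝ × ℝ,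
          u.1 ∈ Set.Icc (0:ℝ) 1 ∧ u.2 ∈ Set.Icc (0:ℝ) (u.1 * x.1 + (1 - u.1) * x.2) ∧
          q = Q x (-(fderiv ℝ φ x (1, 0), fderiv ℝ φ x (0, 1)).1,
                  -(fderiv ℝ φ x (1, 0), fderiv ℝ φ x (0, 1)).2) u} with hS
      have key : ∀ (c pv b C uu : ℝ), 0 < c → 0 ≤ C → |b| ≤ C → 0 ≤ uu → uu ≤ 1 →
          uu * pv / c * b ≤ |pv| / c * C := by
        intro c pv b C uu hc hC hbC hu0 hu1
        calc uu * pv / c * b = (uu / c) * (pv * b) := by ring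
          _ ≤ (uu / c) * (|pv| * C) := by
              apply mul_le_mul_of_nonneg_left _ (by positivity)
              calc pv * b ≤ |pv * b| := le_abs_self _
                _ = |pv| * |b| := abs_mul _ _
                _ ≤ |pv| * C := mul_le_mul_of_nonneg_left hbC (abs_nonneg _)
          _ ≤ (1 / c) * (|pv| * C) := by
              apply mul_le_mul_of_nonneg_right _ (by positivity)
              apply div_le_div_of_nonneg_right hu1 hc.le
          _ = |pv| / c * C := by ring
      have hBdd : BddAbove S := by
        refine ⟨|fderiv ℝ φ x (1, 0)| / r * (μ M * (x.1 + M)) +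
          |fderiv ℝ φ x (0, 1)| / (1 - r) * (μ M * (x.2 + M)), ?_⟩
        rintro q ⟨u, hu1, hu2, rfl⟩
        rw [hQ]
        have hu11 : (0:ℝ) ≤ 1 - u.1 := by linarith [hu1.2]
        have hu2M : u.2 ≤ M := by
          have hcomb : u.1 * x.1 + (1 - u.1) * x.2 ≤ M := by
            nlinarith [mul_nonneg hu1.1 (sub_nonneg.2 (le_max_left x.1 x.2)),
              mul_nonneg hu11 (sub_nonneg.2 (le_max_right x.1 x.2))]
          linarith [hu2.2]
        have hβ1 : |μ u.2 * (x.1 - u.2)| ≤ μ M * (x.1 + M) := by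
          rw [abs_mul]
          apply mul_le_mul
          · rw [abs_of_nonneg (μnn u.2 hu2.1)]; exact μle u.2 M hu2.1 hu2M
          · rw [abs_le]; constructor <;> linarith [hu2.1, hu2M, hM0, hx1, hx2]
          · exact abs_nonneg _
          · exact μnn M hM0
        have hβ2 : |μ u.2 * (x.2 - u.2)| ≤ μ M * (x.2 + M) := by
          rw [abs_mul]
          apply mul_le_mul
          · rw [abs_of_nonneg (μnn u.2 hu2.1)]; exact μle u.2 M hu2.1 hu2M
          · rw [abs_le]; constructor <;> linarith [hu2.1, hu2M, hM0, hx1, hx2]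
          · exact abs_nonneg _
          · exact μnn M hM0
        have hC1 : 0 ≤ μ M * (x.1 + M) := mul_nonneg (μnn M hM0) (by linarith)
        have hC2 : 0 ≤ μ M * (x.2 + M) := mul_nonneg (μnn M hM0) (by linarith)
        have k1 := key r (fderiv ℝ φ x (1, 0)) (μ u.2 * (x.1 - u.2)) (μ M * (x.1 + M))
          u.1 hr0 hC1 hβ1 hu1.1 hu1.2
        have k2 := key (1 - r) (fderiv ℝ φ x (0, 1)) (μ u.2 * (x.2 - u.2)) (μ M * (x.2 + M))
          (1 - u.1) hr1' hC2 hβ2 hu11 (by linarith [hu1.1])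
        have expand : -(u.1 * -(fderiv ℝ φ x (1, 0)) / r * (μ u.2 * (x.1 - u.2)) +
            (1 - u.1) * -(fderiv ℝ φ x (0, 1)) / (1 - r) * (μ u.2 * (x.2 - u.2))) =
            u.1 * fderiv ℝ φ x (1, 0) / r * (μ u.2 * (x.1 - u.2)) +
            (1 - u.1) * fderiv ℝ φ x (0, 1) / (1 - r) * (μ u.2 * (x.2 - u.2)) := by ring
        rw [expand]
        linarith [k1, k2]
      have hmem : (1:ℝ) ∈ S := by
        rcases hOR with h1 | h2
        · have hx1pos : 0 < x.1 := lt_trans hsb h1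
          obtain ⟨s₁, hs₁m, hs₁⟩ := (hγ x.1 hx1pos).1
          simp only [] at hs₁
          have e1' : ∀ᶠ t in nhds x.1,
              r * T x.1 - φ (x.1, x.2) ≤ r * T t - φ (t, x.2) := by
            filter_upwards [e1] with t ht
            have ha : W (t, x.2) = r * T t + (1 - r) * T x.2 := by rw [hW]
            have hb : W x = r * T x.1 + (1 - r) * T x.2 := by rw [hW]
            have hc : φ x = φ (x.1, x.2) := rfl
            rw [ha, hb, hc] at ht
            linarith
          have hp : fderiv ℝ φ x (1, 0) = r * (1 / γ x.1) :=
            pinMin r x.1 _ _ hr0 h1 l1 e1'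
          refine ⟨(1, s₁), ⟨zero_le_one, le_rfl⟩, ?_, ?_⟩
          · simpa using hs₁m
          · rw [hQ]
            simp only [hp]
            rw [hs₁]
            have := (γpos x.1 hx1pos).ne'
            field_simp
            ring
        · have hx2pos : 0 < x.2 := lt_trans hsb h2
          obtain ⟨s₂, hs₂m, hs₂⟩ := (hγ x.2 hx2pos).1
          simp only [] at hs₂
          have e2' : ∀ᶠ t in nhds x.2,
              (1 - r) * T x.2 - φ (x.1, x.2) ≤ (1 - r) * T t - φ (x.1, t) := by
            filter_upwards [e2] with t ht
            have ha : W (x.1, t) = r * T x.1 + (1 - r) * T t := by rw [hW]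
            have hb : W x = r * T x.1 + (1 - r) * T x.2 := by rw [hW]
            have hc : φ x = φ (x.1, x.2) := rfl
            rw [ha, hb, hc] at ht
            linarith
          have hp : fderiv ℝ φ x (0, 1) = (1 - r) * (1 / γ x.2) :=
            pinMin (1 - r) x.2 _ _ hr1' h2 l2 e2'
          refine ⟨(0, s₂), ⟨le_rfl, zero_le_one⟩, ?_, ?_⟩
          · simpa using hs₂m
          · rw [hQ]
            simp only [hp]
            rw [hs₂]
            have := (γpos x.2 hx2pos).ne'
            field_simp
            ring
      have : (1:ℝ) ≤ sSup S := le_csSup hBdd hmem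
      linarith
  · intro x hx1 hx2 hm
    rw [hW, Tzero x.1 hx1 (le_trans (le_max_left _ _) hm),
      Tzero x.2 hx2 (le_trans (le_max_right _ _) hm)]
    ring
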